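/- Let k be a field of characteristic p, where p is an odd prime. Let A be the quotient of the free associative k-algebra on generators x_1, x_2 by the two-sided ideal generated by the three elements x_2·x_1 − x_1·x_2 + (1/2)·x_1^2, x_1^p, and x_2^p (the Jordan plane in characteristic p). Then the images of the monomials x_1^a·x_2^b with 0 ≤ a, b ≤ p−1 form a k-basis of A; in particular dim_k A = p^2. -/

import Mathlib

noncomputable section

/-- The first generator of the free algebra on two generators. -/
def jX1 (k : Type*) [Field k] : FreeAlgebra k (Fin 2) := FreeAlgebra.ι k 0

/-- The second generator of the free algebra on two generators. -/
def jX2 (k : Type*) [Field k] : FreeAlgebra k (Fin 2) := FreeAlgebra.ι k 1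

/-- The relation whose `RingQuot` is the quotient by the two-sided ideal generated by
`x₂x₁ - x₁x₂ + (1/2)x₁²`, `x₁ᵖ` and `x₂ᵖ` (the Jordan plane in characteristic `p`). -/
def jordanRel (k : Type*) [Field k] (p : ℕ) :
    FreeAlgebra k (Fin 2) → FreeAlgebra k (Fin 2) → Prop := fun a b =>
  b = 0 ∧
    (a = jX2 k * jX1 k - jX1 k * jX2 k + (2⁻¹ : k) • (jX1 k ^ 2) ∨
     a = jX1 k ^ p ∨ a = jX2 k ^ p)

/-- The image of the monomial `x₁^a x₂^b` in the Jordan plane. -/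
def jordanMono (k : Type*) [Field k] (p : ℕ) (m : Fin p × Fin p) :
    RingQuot (jordanRel k p) :=
  RingQuot.mkAlgHom k (jordanRel k p) (jX1 k ^ (m.1 : ℕ) * jX2 k ^ (m.2 : ℕ))

section JordanAux

variable {k : Type*} [Field k] {p : ℕ}

/-- generic "lower the first index" operator with coefficients. -/
def lopc (c : Fin p → k) : ((Fin p × Fin p → k) →ₗ[k] (Fin p × Fin p → k)) where
  toFun f m := if h : 0 < (m.1 : ℕ) then
      c m.1 * f (⟨(m.1 : ℕ) - 1, by have := m.1.isLt; omega⟩, m.2) else 0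
  map_add' f g := by
    funext m
    by_cases h : 0 < (m.1 : ℕ)
    all_goals rw [Pi.add_apply]
    · rw [dif_pos h, dif_pos h, dif_pos h, Pi.add_apply, mul_add]
    · rw [dif_neg h, dif_neg h, dif_neg h, add_zero]
  map_smul' a f := by
    funext m
    dsimp only [RingHom.id_apply]
    rw [Pi.smul_apply]
    by_cases h : 0 < (m.1 : ℕ)
    · rw [dif_pos h, dif_pos h, Pi.smul_apply, smul_eq_mul, smul_eq_mul]; ring
    · rw [dif_neg h, dif_neg h, smul_eq_mul, mul_zero]

/-- "lower the second index" shift. -/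
def sop : ((Fin p × Fin p → k) →ₗ[k] (Fin p × Fin p → k)) where
  toFun f m := if h : 0 < (m.2 : ℕ) then
      f (m.1, ⟨(m.2 : ℕ) - 1, by have := m.2.isLt; omega⟩) else 0
  map_add' f g := by
    funext m
    by_cases h : 0 < (m.2 : ℕ)
    all_goals rw [Pi.add_apply]
    · rw [dif_pos h, dif_pos h, dif_pos h, Pi.add_apply]
    · rw [dif_neg h, dif_neg h, dif_neg h, add_zero]
  map_smul' a f := by
    funext m
    dsimp only [RingHom.id_apply]
    rw [Pi.smul_apply]
    by_cases h : 0 < (m.2 : ℕ)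
    · rw [dif_pos h, dif_pos h, Pi.smul_apply]
    · rw [dif_neg h, dif_neg h, smul_zero]

lemma lopc_apply_pos (c : Fin p → k) (f : Fin p × Fin p → k) (m : Fin p × Fin p)
    (h : 0 < (m.1 : ℕ)) :
    lopc c f m = c m.1 * f (⟨(m.1 : ℕ) - 1, by have := m.1.isLt; omega⟩, m.2) :=
  dif_pos h

lemma lopc_apply_neg (c : Fin p → k) (f : Fin p × Fin p → k) (m : Fin p × Fin p)
    (h : ¬ 0 < (m.1 : ℕ)) : lopc c f m = 0 := dif_neg h

lemma sop_apply_pos (f : Fin p × Fin p → k) (m : Fin p × Fin p)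
    (h : 0 < (m.2 : ℕ)) :
    sop f m = f (m.1, ⟨(m.2 : ℕ) - 1, by have := m.2.isLt; omega⟩) :=
  dif_pos h

lemma sop_apply_neg (f : Fin p × Fin p → k) (m : Fin p × Fin p)
    (h : ¬ 0 < (m.2 : ℕ)) : sop f m = 0 := dif_neg h

lemma lopc_pow_vanish (c : Fin p → k) :
    ∀ (n : ℕ) (f : Fin p × Fin p → k) (m : Fin p × Fin p), (m.1 : ℕ) < n →
      ((lopc c) ^ n) f m = 0 := by
  intro n
  induction n with
  | zero => intro f m hm; omega
  | succ n ih =>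
    intro f m hm
    rw [pow_succ', Module.End.mul_apply]
    by_cases h : 0 < (m.1 : ℕ)
    · rw [lopc_apply_pos c _ m h, ih _ _ (by dsimp only; omega), mul_zero]
    · exact lopc_apply_neg c _ m h

lemma lopc_pow_p (c : Fin p → k) : (lopc c) ^ p = 0 :=
  LinearMap.ext fun f => funext fun m => lopc_pow_vanish c p f m m.1.isLt

lemma sop_pow_vanish :
    ∀ (n : ℕ) (f : Fin p × Fin p → k) (m : Fin p × Fin p), (m.2 : ℕ) < n →
      ((sop : (Fin p × Fin p → k) →ₗ[k] _) ^ n) f m = 0 := by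
  intro n
  induction n with
  | zero => intro f m hm; omega
  | succ n ih =>
    intro f m hm
    rw [pow_succ', Module.End.mul_apply]
    by_cases h : 0 < (m.2 : ℕ)
    · rw [sop_apply_pos _ m h, ih _ _ (by dsimp only; omega)]
    · exact sop_apply_neg _ m h

lemma sop_pow_p : (sop : (Fin p × Fin p → k) →ₗ[k] _) ^ p = 0 :=
  LinearMap.ext fun f => funext fun m => sop_pow_vanish p f m m.2.isLt

lemma sop_comm_lopc (c : Fin p → k) :
    (sop : (Fin p × Fin p → k) →ₗ[k] _) * lopc c = lopc c * sop := by
  refine LinearMap.ext fun f => funext fun m => ?_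
  rw [Module.End.mul_apply, Module.End.mul_apply]
  dsimp [lopc, sop]
  split_ifs <;> simp_all

def ctc : Fin p → k := fun i => -((((i : ℕ) - 1 : ℕ) : k) * 2⁻¹)

lemma key_comm :
    ((sop + lopc (ctc (k := k) (p := p))) * lopc (fun _ => 1)
        - lopc (fun _ => 1) * (sop + lopc ctc))
      + (2⁻¹ : k) • (lopc (fun _ => (1:k)) * lopc (fun _ => 1)) = 0 := by
  refine LinearMap.ext fun f => funext fun m => ?_
  simp only [add_mul, mul_add, LinearMap.sub_apply, LinearMap.add_apply, LinearMap.smul_apply,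
    Module.End.mul_apply, Pi.add_apply, Pi.sub_apply, Pi.smul_apply, LinearMap.zero_apply,
    Pi.zero_apply, smul_eq_mul]
  dsimp [lopc, sop]; dsimp only [ctc]
  split_ifs <;> try ring
  all_goals (
    rename_i h1 h2
    have hc : (((m.1 : ℕ) - 1 : ℕ) : k) = (((m.1 : ℕ) - 1 - 1 : ℕ) : k) + 1 := by
      rw [show (m.1 : ℕ) - 1 = ((m.1 : ℕ) - 1 - 1) + 1 from by omega]
      push_cast
      ring
    rw [hc]
    ring)

lemma yop_pow_p (hp : p.Prime) [CharP k p] :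
    ((sop + lopc (ctc (k := k) (p := p))) : (Fin p × Fin p → k) →ₗ[k] _) ^ p = 0 := by
  haveI : Fact p.Prime := ⟨hp⟩
  haveI : Nontrivial (Fin p × Fin p → k) := by
    have h0 : 0 < p := hp.pos
    exact ⟨(fun _ => 1), (fun _ => 0), fun h => by
      have := congrFun h (⟨0, h0⟩, ⟨0, h0⟩); simp at this⟩
  haveI : CharP ((Fin p × Fin p → k) →ₗ[k] (Fin p × Fin p → k)) p := by
    refine charP_of_injective_algebraMap (R := k) ?_ p
    intro a b hab
    have := congrFun (congrArg (fun (L : (Fin p × Fin p → k) →ₗ[k] (Fin p × Fin p → k)) =>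
      L (fun _ => (1:k))) hab) (⟨0, hp.pos⟩, ⟨0, hp.pos⟩)
    simpa [Module.algebraMap_end_apply] using this
  have hcomm : Commute (sop : (Fin p × Fin p → k) →ₗ[k] _) (lopc ctc) := sop_comm_lopc ctc
  rw [add_pow_char_of_commute _ hcomm, sop_pow_p, lopc_pow_p, add_zero]

/-- delta function -/
def ee (m₀ : Fin p × Fin p) : Fin p × Fin p → k := fun m => if m = m₀ then 1 else 0

lemma li_ee : LinearIndependent k (ee (k := k) (p := p)) := by
  rw [Fintype.linearIndependent_iff]
  intro g hg m₀
  have := congrFun hg m₀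
  simpa [ee, Finset.sum_apply, Finset.sum_ite_eq] using this

lemma lopc_ee (c : Fin p → k) (i j : Fin p) (h : (i : ℕ) + 1 < p) :
    lopc c (ee (i, j)) = c ⟨(i : ℕ) + 1, h⟩ • ee (k := k) (⟨(i : ℕ) + 1, h⟩, j) := by
  funext m
  obtain ⟨m1, m2⟩ := m
  dsimp [lopc, ee]
  by_cases h1 : 0 < (m1 : ℕ)
  · rw [dif_pos h1]
    by_cases h2 : m1 = ⟨(i : ℕ) + 1, h⟩ ∧ m2 = j
    · obtain ⟨rfl, rfl⟩ := h2
      rw [if_pos, if_pos rfl]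
      exact Prod.ext (Fin.ext (by simp)) rfl
    · rw [if_neg, if_neg, mul_zero, mul_zero]
      · intro hc
        rw [Prod.mk.injEq] at hc
        exact h2 ⟨hc.1, hc.2⟩
      · intro hc
        rw [Prod.mk.injEq] at hc
        obtain ⟨ha, hb⟩ := hc
        have hv := congrArg Fin.val ha
        simp only [Fin.val_mk] at hv
        exact h2 ⟨Fin.ext (by simp only [Fin.val_mk]; omega), hb⟩
  · rw [dif_neg h1, if_neg, mul_zero]
    intro hc
    rw [Prod.mk.injEq] at hc
    have hv := congrArg Fin.val hc.1
    simp only [Fin.val_mk] at hv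
    omega

lemma sop_ee (i j : Fin p) (h : (j : ℕ) + 1 < p) :
    sop (ee (i, j)) = ee (k := k) (i, ⟨(j : ℕ) + 1, h⟩) := by
  funext m
  obtain ⟨m1, m2⟩ := m
  dsimp [sop, ee]
  by_cases h1 : 0 < (m2 : ℕ)
  · rw [dif_pos h1]
    by_cases h2 : m1 = i ∧ m2 = ⟨(j : ℕ) + 1, h⟩
    · obtain ⟨rfl, rfl⟩ := h2
      rw [if_pos, if_pos rfl]
      exact Prod.ext rfl (Fin.ext (by simp))
    · rw [if_neg, if_neg]
      · intro hc
        rw [Prod.mk.injEq] at hc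
        exact h2 ⟨hc.1, hc.2⟩
      · intro hc
        rw [Prod.mk.injEq] at hc
        obtain ⟨ha, hb⟩ := hc
        have hv := congrArg Fin.val hb
        simp only [Fin.val_mk] at hv
        exact h2 ⟨ha, Fin.ext (by simp only [Fin.val_mk]; omega)⟩
  · rw [dif_neg h1, if_neg]
    intro hc
    rw [Prod.mk.injEq] at hc
    have hv := congrArg Fin.val hc.2
    simp only [Fin.val_mk] at hv
    omega

lemma yop_pow_ee (h2 : 1 < p) (h0 : 0 < p) (b : ℕ) (hb : b < p) :
    (((sop + lopc (ctc (k := k))) : (Fin p × Fin p → k) →ₗ[k] _) ^ b)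
        (ee (⟨0, h0⟩, ⟨0, h0⟩))
      = ee (⟨0, h0⟩, ⟨b, hb⟩) := by
  induction b with
  | zero => rw [pow_zero]; rfl
  | succ b ih =>
    have hb' : b < p := by omega
    rw [pow_succ', Module.End.mul_apply, ih hb', LinearMap.add_apply]
    have hs : sop (ee (k := k) ((⟨0, h0⟩ : Fin p), (⟨b, hb'⟩ : Fin p)))
        = ee (⟨0, h0⟩, ⟨b + 1, hb⟩) := by
      have := sop_ee (k := k) (⟨0, h0⟩ : Fin p) (⟨b, hb'⟩ : Fin p) (by simpa using hb)
      simpa using this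
    have ht : lopc (ctc (k := k)) (ee ((⟨0, h0⟩ : Fin p), (⟨b, hb'⟩ : Fin p))) = 0 := by
      have := lopc_ee (ctc (k := k)) (⟨0, h0⟩ : Fin p) (⟨b, hb'⟩ : Fin p) (by simpa using h2)
      rw [this]
      have hc : ctc (k := k) (⟨(((⟨0, h0⟩ : Fin p)) : ℕ) + 1, by simpa using h2⟩ : Fin p) = 0 := by
        simp [ctc]
      rw [hc, zero_smul]
    rw [hs, ht, add_zero]

lemma xop_pow_ee (h0 : 0 < p) (a : ℕ) (ha : a < p) (j : Fin p) :
    (((lopc (fun _ => (1 : k))) : (Fin p × Fin p → k) →ₗ[k] _) ^ a)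
        (ee (⟨0, h0⟩, j)) = ee (⟨a, ha⟩, j) := by
  induction a with
  | zero => rw [pow_zero]; rfl
  | succ a ih =>
    have ha' : a < p := by omega
    rw [pow_succ', Module.End.mul_apply, ih ha']
    have := lopc_ee (fun _ => (1 : k)) (⟨a, ha'⟩ : Fin p) j (by simpa using ha)
    rw [this, one_smul]

end JordanAux

section Main

variable {k : Type*} [Field k] {p : ℕ}

-- abbreviations for the quotient generators
local notation "mkJ" => RingQuot.mkAlgHom k (jordanRel k p)

lemma jordan_xp : (mkJ (jX1 k)) ^ p = 0 := by
  rw [← map_pow]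
  have h := RingQuot.mkAlgHom_rel k
    (s := jordanRel k p) (x := jX1 k ^ p) (y := 0) ⟨rfl, Or.inr (Or.inl rfl)⟩
  rw [h, map_zero]

lemma jordan_yp : (mkJ (jX2 k)) ^ p = 0 := by
  rw [← map_pow]
  have h := RingQuot.mkAlgHom_rel k
    (s := jordanRel k p) (x := jX2 k ^ p) (y := 0) ⟨rfl, Or.inr (Or.inr rfl)⟩
  rw [h, map_zero]

lemma jordan_comm :
    mkJ (jX2 k) * mkJ (jX1 k)
      = mkJ (jX1 k) * mkJ (jX2 k) - (2⁻¹ : k) • (mkJ (jX1 k)) ^ 2 := by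
  have h := RingQuot.mkAlgHom_rel k
    (s := jordanRel k p)
    (x := jX2 k * jX1 k - jX1 k * jX2 k + (2⁻¹ : k) • (jX1 k ^ 2)) (y := 0)
    ⟨rfl, Or.inl rfl⟩
  rw [map_zero, map_add, map_sub, map_mul, map_mul, map_smul, map_pow] at h
  rw [sub_add_eq_add_sub, sub_eq_zero] at h
  exact eq_sub_of_add_eq h

lemma jordan_L1 (c : ℕ) :
    mkJ (jX2 k) * (mkJ (jX1 k)) ^ c
      = (mkJ (jX1 k)) ^ c * mkJ (jX2 k)
        - ((c : k) * 2⁻¹) • (mkJ (jX1 k)) ^ (c + 1) := by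
  set x := mkJ (jX1 k)
  set y := mkJ (jX2 k)
  induction c with
  | zero => simp
  | succ c ih =>
    calc y * x ^ (c + 1) = (y * x ^ c) * x := by rw [pow_succ, mul_assoc]
      _ = (x ^ c * y - ((c : k) * 2⁻¹) • x ^ (c + 1)) * x := by rw [ih]
      _ = x ^ c * (y * x) - ((c : k) * 2⁻¹) • x ^ (c + 2) := by
          rw [sub_mul, smul_mul_assoc, mul_assoc, ← pow_succ]
      _ = x ^ c * (x * y - (2⁻¹ : k) • x ^ 2) - ((c : k) * 2⁻¹) • x ^ (c + 2) := by
          rw [jordan_comm]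
      _ = x ^ (c + 1) * y - (((c + 1 : ℕ) : k) * 2⁻¹) • x ^ (c + 2) := by
          rw [mul_sub, mul_smul_comm, ← mul_assoc, ← pow_succ, ← pow_add, sub_sub, ← add_smul]
          congr 1
          push_cast
          ring

def jordanT (k : Type*) [Field k] (p : ℕ) : Submodule k (RingQuot (jordanRel k p)) :=
  Submodule.span k (Set.range fun ab : ℕ × ℕ =>
    (RingQuot.mkAlgHom k (jordanRel k p) (jX1 k)) ^ ab.1
      * (RingQuot.mkAlgHom k (jordanRel k p) (jX2 k)) ^ ab.2)

lemma mem_T_mono (a b : ℕ) : (mkJ (jX1 k)) ^ a * (mkJ (jX2 k)) ^ b ∈ jordanT k p :=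
  Submodule.subset_span ⟨(a, b), rfl⟩

lemma jordanT_mul_x {v} (hv : v ∈ jordanT k p) : mkJ (jX1 k) * v ∈ jordanT k p := by
  induction hv using Submodule.span_induction with
  | mem w hw =>
    obtain ⟨⟨a, b⟩, rfl⟩ := hw
    have : mkJ (jX1 k) * ((mkJ (jX1 k)) ^ a * (mkJ (jX2 k)) ^ b)
        = (mkJ (jX1 k)) ^ (a + 1) * (mkJ (jX2 k)) ^ b := by
      rw [← mul_assoc, ← pow_succ']
    rw [this]; exact mem_T_mono _ _
  | zero => rw [mul_zero]; exact Submodule.zero_mem _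
  | add u w _ _ hu hw => rw [mul_add]; exact Submodule.add_mem _ hu hw
  | smul a u _ hu => rw [mul_smul_comm]; exact Submodule.smul_mem _ _ hu

lemma jordanT_mul_y {v} (hv : v ∈ jordanT k p) : mkJ (jX2 k) * v ∈ jordanT k p := by
  induction hv using Submodule.span_induction with
  | mem w hw =>
    obtain ⟨⟨a, b⟩, rfl⟩ := hw
    have : mkJ (jX2 k) * ((mkJ (jX1 k)) ^ a * (mkJ (jX2 k)) ^ b)
        = (mkJ (jX1 k)) ^ a * (mkJ (jX2 k)) ^ (b + 1)
          - (((a : k)) * 2⁻¹) • ((mkJ (jX1 k)) ^ (a + 1) * (mkJ (jX2 k)) ^ b) := by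
      rw [← mul_assoc, jordan_L1, sub_mul, smul_mul_assoc, mul_assoc, ← pow_succ']
    rw [this]
    exact Submodule.sub_mem _ (mem_T_mono _ _) (Submodule.smul_mem _ _ (mem_T_mono _ _))
  | zero => rw [mul_zero]; exact Submodule.zero_mem _
  | add u w _ _ hu hw => rw [mul_add]; exact Submodule.add_mem _ hu hw
  | smul a u _ hu => rw [mul_smul_comm]; exact Submodule.smul_mem _ _ hu

lemma jordanT_mul_yr {v} (hv : v ∈ jordanT k p) : v * mkJ (jX2 k) ∈ jordanT k p := by
  induction hv using Submodule.span_induction with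
  | mem w hw =>
    obtain ⟨⟨a, b⟩, rfl⟩ := hw
    have : ((mkJ (jX1 k)) ^ a * (mkJ (jX2 k)) ^ b) * mkJ (jX2 k)
        = (mkJ (jX1 k)) ^ a * (mkJ (jX2 k)) ^ (b + 1) := by
      rw [mul_assoc, ← pow_succ]
    rw [this]; exact mem_T_mono _ _
  | zero => rw [zero_mul]; exact Submodule.zero_mem _
  | add u w _ _ hu hw => rw [add_mul]; exact Submodule.add_mem _ hu hw
  | smul a u _ hu => rw [smul_mul_assoc]; exact Submodule.smul_mem _ _ hu

lemma jordanT_mul_xpow (n : ℕ) {v} (hv : v ∈ jordanT k p) :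
    (mkJ (jX1 k)) ^ n * v ∈ jordanT k p := by
  induction n with
  | zero => simpa using hv
  | succ n ih => rw [pow_succ', mul_assoc]; exact jordanT_mul_x ih

lemma jordanT_mul_ypow (n : ℕ) {v} (hv : v ∈ jordanT k p) :
    (mkJ (jX2 k)) ^ n * v ∈ jordanT k p := by
  induction n with
  | zero => simpa using hv
  | succ n ih => rw [pow_succ', mul_assoc]; exact jordanT_mul_y ih

lemma jordanT_mul_ypow_r (n : ℕ) {v} (hv : v ∈ jordanT k p) :
    v * (mkJ (jX2 k)) ^ n ∈ jordanT k p := by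
  induction n with
  | zero => simpa using hv
  | succ n ih => rw [pow_succ, ← mul_assoc]; exact jordanT_mul_yr ih

lemma jordanT_mul {u v} (hu : u ∈ jordanT k p) (hv : v ∈ jordanT k p) :
    u * v ∈ jordanT k p := by
  induction hu using Submodule.span_induction with
  | mem w hw =>
    obtain ⟨⟨a, b⟩, rfl⟩ := hw
    rw [mul_assoc]
    exact jordanT_mul_xpow a (jordanT_mul_ypow b hv)
  | zero => rw [zero_mul]; exact Submodule.zero_mem _
  | add u w _ _ hu hw => rw [add_mul]; exact Submodule.add_mem _ hu hw
  | smul a u _ hu => rw [smul_mul_assoc]; exact Submodule.smul_mem _ _ hu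

lemma jordanT_top : jordanT k p = ⊤ := by
  rw [Submodule.eq_top_iff']
  intro z
  obtain ⟨w, rfl⟩ := RingQuot.mkAlgHom_surjective k (jordanRel k p) z
  induction w using FreeAlgebra.induction with
  | grade0 r =>
    rw [AlgHom.commutes, Algebra.algebraMap_eq_smul_one]
    have h1 : (1 : RingQuot (jordanRel k p)) = (mkJ (jX1 k)) ^ 0 * (mkJ (jX2 k)) ^ 0 := by simp
    rw [h1]
    exact Submodule.smul_mem _ _ (mem_T_mono 0 0)
  | grade1 i =>
    fin_cases i
    · show mkJ (jX1 k) ∈ jordanT k p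
      simpa using mem_T_mono (k := k) (p := p) 1 0
    · show mkJ (jX2 k) ∈ jordanT k p
      simpa using mem_T_mono (k := k) (p := p) 0 1
  | mul a b ha hb => rw [map_mul]; exact jordanT_mul ha hb
  | add a b ha hb => rw [map_add]; exact Submodule.add_mem _ ha hb

lemma jordan_span : Submodule.span k (Set.range (jordanMono k p)) = ⊤ := by
  refine le_antisymm le_top ?_
  have hTS : jordanT k p ≤ Submodule.span k (Set.range (jordanMono k p)) := by
    rw [jordanT, Submodule.span_le]
    rintro _ ⟨⟨a, b⟩, rfl⟩
    show mkJ (jX1 k) ^ a * mkJ (jX2 k) ^ b ∈ _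
    by_cases ha : a < p
    · by_cases hb : b < p
      · refine Submodule.subset_span ⟨((⟨a, ha⟩ : Fin p), (⟨b, hb⟩ : Fin p)), ?_⟩
        simp [jordanMono, map_mul, map_pow]
      · have hz : (mkJ (jX2 k)) ^ b = 0 := by
          rw [show b = (b - p) + p by omega, pow_add, jordan_yp, mul_zero]
        rw [hz, mul_zero]
        exact Submodule.zero_mem _
    · have hz : (mkJ (jX1 k)) ^ a = 0 := by
        rw [show a = p + (a - p) by omega, pow_add, jordan_xp, zero_mul]
      rw [hz, zero_mul]
      exact Submodule.zero_mem _
  calc (⊤ : Submodule k (RingQuot (jordanRel k p))) = jordanT k p := jordanT_top.symm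
    _ ≤ _ := hTS

lemma jordan_li (hp : p.Prime) [CharP k p] : LinearIndependent k (jordanMono k p) := by
  have h0 : 0 < p := hp.pos
  have h2 : 1 < p := hp.one_lt
  let φ : FreeAlgebra k (Fin 2) →ₐ[k] ((Fin p × Fin p → k) →ₗ[k] (Fin p × Fin p → k)) :=
    FreeAlgebra.lift k (fun i => if i = 0 then lopc (fun _ => (1 : k)) else sop + lopc ctc)
  have hφ1 : φ (jX1 k) = lopc (fun _ => (1 : k)) := by
    show FreeAlgebra.lift k _ (FreeAlgebra.ι k 0) = _
    rw [FreeAlgebra.lift_ι_apply]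
    simp
  have hφ2 : φ (jX2 k) = sop + lopc ctc := by
    show FreeAlgebra.lift k _ (FreeAlgebra.ι k 1) = _
    rw [FreeAlgebra.lift_ι_apply]
    simp
  have hrel : ∀ ⦃a b⦄, jordanRel k p a b → φ a = φ b := by
    rintro a b ⟨rfl, h | h | h⟩ <;> subst h <;> rw [map_zero]
    · rw [map_add, map_sub, map_mul, map_mul, map_smul, map_pow, hφ1, hφ2, pow_two]
      exact key_comm
    · rw [map_pow, hφ1]
      exact lopc_pow_p _
    · rw [map_pow, hφ2]
      exact yop_pow_p hp
  let Φ := RingQuot.liftAlgHom k ⟨φ, hrel⟩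
  let e0 : Fin p × Fin p → k := ee (⟨0, h0⟩, ⟨0, h0⟩)
  let ψ : RingQuot (jordanRel k p) →ₗ[k] (Fin p × Fin p → k) :=
    (LinearMap.applyₗ e0) ∘ₗ Φ.toLinearMap
  have hkey : ∀ m, ψ (jordanMono k p m) = ee m := by
    intro m
    show Φ (jordanMono k p m) e0 = ee m
    rw [jordanMono, RingQuot.liftAlgHom_mkAlgHom_apply, map_mul, map_pow, map_pow, hφ1, hφ2,
      Module.End.mul_apply]
    show _ = ee (m.1, m.2)
    rw [yop_pow_ee h2 h0 (m.2 : ℕ) m.2.isLt, xop_pow_ee h0 (m.1 : ℕ) m.1.isLt]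
  refine LinearIndependent.of_comp ψ ?_
  have hfun : (⇑ψ ∘ jordanMono k p) = ee := funext hkey
  rw [hfun]
  exact li_ee

end Main

theorem stmt_1 (k : Type*) [Field k] (p : ℕ) (hp : p.Prime) (hodd : Odd p) [CharP k p] :
    LinearIndependent k (jordanMono k p) ∧
      Submodule.span k (Set.range (jordanMono k p)) = ⊤ ∧
      Module.finrank k (RingQuot (jordanRel k p)) = p ^ 2 := by
  have li := jordan_li (k := k) (p := p) hp
  have hspan := jordan_span (k := k) (p := p)
  refine ⟨li, hspan, ?_⟩
  let B := Module.Basis.mk li hspan.ge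
  rw [Module.finrank_eq_card_basis B, Fintype.card_prod, Fintype.card_fin, sq]
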